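/- arXiv:0802.0316 — 3 statements merged into one kernel-verified Lean document; each statement's English description precedes it below -/
import Mathlib

section
/- For all k, j ∈ ℤ³_H one has (1/|Ω|)∫_Ω φ_k(t)·conj(φ_j(t)) dt = δ_{k,j}, and the system {φ_j : j ∈ ℤ³_H} is a complete orthonormal system (an orthonormal basis) of L²(Ω) with respect to the inner product ⟨f,g⟩ := (1/|Ω|)∫_Ω f(t)·conj(g(t)) dt. -/
noncomputable section

open MeasureTheory Filter ComplexConjugate

/-- The (half-open) regular hexagon `Ω` in the plane `t₁+t₂+t₃=0`, in the
coordinates `(t₁,t₂)` (so that `t₃ = -(t₁+t₂)`):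
`-1 ≤ t₁ < 1`, `-1 ≤ t₂ < 1`, `-1 ≤ -t₃ = t₁+t₂ < 1`. -/
def Hex : Set (ℝ × ℝ) :=
  {t | -1 ≤ t.1 ∧ t.1 < 1 ∧ -1 ≤ t.2 ∧ t.2 < 1 ∧ -1 ≤ t.1 + t.2 ∧ t.1 + t.2 < 1}

/-- The area `|Ω|` of the hexagon. -/
def hexVol : ℝ := (MeasureTheory.volume Hex).toReal

/-- The exponential `φ_j(t) = exp(2πi(j₁t₁+j₂t₂+j₃t₃)/3)` for `j ∈ ℤ³_H`,
in coordinates: `j = (j₁,j₂)`, `j₃ = -(j₁+j₂)`, `t = (t₁,t₂)`, `t₃ = -(t₁+t₂)`,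
so that `j₃t₃ = (j₁+j₂)(t₁+t₂)`. -/
def phiH (j : ℤ × ℤ) (t : ℝ × ℝ) : ℂ :=
  Complex.exp (2 * Real.pi * Complex.I *
    ((j.1 : ℂ) * t.1 + (j.2 : ℂ) * t.2 + ((j.1 : ℂ) + (j.2 : ℂ)) * ((t.1 : ℂ) + (t.2 : ℂ))) / 3)

open Set

namespace StmtAux

def Amap : ℝ × ℝ → ℝ × ℝ := fun t => (t.1 - t.2 + 1, t.2)

def Pmap : ℝ × ℝ → ℝ × ℝ :=
  fun p => (p.1 + (if p.1 < 0 then 3 else 0), p.2 + (if p.2 < 0 then 1 else 0))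

def Qmap : ℝ × ℝ → ℝ × ℝ := Pmap ∘ Amap

def Smap : ℝ × ℝ → ℝ × ℝ := fun p =>
  if p.1 + 2*p.2 < 2 then (p.1 + p.2 - 1, p.2)
  else if p.1 + p.2 < 3 then (p.1 + p.2 - 2, p.2 - 1)
  else (p.1 + p.2 - 4, p.2)

def Sset : Set (ℝ × ℝ) :=
  {p | 0 ≤ p.1 + p.2 ∧ p.1 + p.2 < 2 ∧ -1 ≤ p.2 ∧ p.2 < 1 ∧ 0 ≤ p.1 + 2*p.2 ∧ p.1 + 2*p.2 < 2}

def Rset : Set (ℝ × ℝ) := Ico (0:ℝ) 3 ×ˢ Ico (0:ℝ) 1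

def C0 : Set (ℝ × ℝ) := Sset ∩ {p | 0 ≤ p.1 ∧ 0 ≤ p.2}
def C1 : Set (ℝ × ℝ) := Sset ∩ {p | 0 ≤ p.1 ∧ p.2 < 0}
def C2 : Set (ℝ × ℝ) := Sset ∩ {p | p.1 < 0}

def D1 : Set (ℝ × ℝ) :=
  {p | 1 ≤ p.1+p.2 ∧ p.1+p.2 < 3 ∧ 0 ≤ p.2 ∧ p.2 < 1 ∧ 2 ≤ p.1+2*p.2 ∧ p.1+2*p.2 < 4 ∧ 0 ≤ p.1}
def D2 : Set (ℝ × ℝ) :=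
  {p | 3 ≤ p.1+p.2 ∧ p.1+p.2 < 5 ∧ -1 ≤ p.2 ∧ p.2 < 1 ∧ 3 ≤ p.1+2*p.2 ∧ p.1+2*p.2 < 5 ∧ p.1 < 3}

lemma measurable_Amap : Measurable Amap :=
  ((measurable_fst.sub measurable_snd).add_const 1).prodMk measurable_snd

lemma measurable_Pmap : Measurable Pmap := by
  apply Measurable.prodMk
  · exact measurable_fst.add <| Measurable.ite (measurableSet_lt measurable_fst measurable_const)
      measurable_const measurable_const
  · exact measurable_snd.add <| Measurable.ite (measurableSet_lt measurable_snd measurable_const)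
      measurable_const measurable_const

lemma measurable_Qmap : Measurable Qmap := measurable_Pmap.comp measurable_Amap

lemma measurable_Smap : Measurable Smap := by
  unfold Smap
  apply Measurable.ite
  · exact measurableSet_lt (measurable_fst.add (measurable_snd.const_mul 2)) measurable_const
  · exact ((measurable_fst.add measurable_snd).sub measurable_const).prodMk measurable_snd
  · apply Measurable.ite
    · exact measurableSet_lt (measurable_fst.add measurable_snd) measurable_const
    · exact ((measurable_fst.add measurable_snd).sub measurable_const).prodMk
        (measurable_snd.sub measurable_const)
    · exact ((measurable_fst.add measurable_snd).sub measurable_const).prodMk measurable_snd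

lemma mHex : MeasurableSet Hex := by
  have : Hex = (Ico (-1:ℝ) 1 ×ˢ Ico (-1:ℝ) 1) ∩ ((fun p : ℝ × ℝ => p.1 + p.2) ⁻¹' Ico (-1:ℝ) 1) := by
    ext ⟨x, y⟩
    simp only [Hex, mem_setOf_eq, mem_inter_iff, mem_prod, mem_Ico, mem_preimage]
    tauto
  rw [this]
  exact (measurableSet_Ico.prod measurableSet_Ico).inter
    ((measurable_fst.add measurable_snd) measurableSet_Ico)

lemma mSset : MeasurableSet Sset := by
  have : Sset = ((fun p : ℝ × ℝ => p.1 + p.2) ⁻¹' Ico (0:ℝ) 2) ∩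
      ((fun p : ℝ × ℝ => p.2) ⁻¹' Ico (-1:ℝ) 1) ∩
      ((fun p : ℝ × ℝ => p.1 + 2*p.2) ⁻¹' Ico (0:ℝ) 2) := by
    ext ⟨x, y⟩; simp only [Sset, mem_setOf_eq, mem_inter_iff, mem_preimage, mem_Ico]; tauto
  rw [this]
  exact (((measurable_fst.add measurable_snd) measurableSet_Ico).inter
    (measurable_snd measurableSet_Ico)).inter
    ((measurable_fst.add (measurable_snd.const_mul 2)) measurableSet_Ico)

lemma mRset : MeasurableSet Rset := measurableSet_Ico.prod measurableSet_Ico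

lemma mD1 : MeasurableSet D1 := by
  have : D1 = ((fun p : ℝ × ℝ => p.1 + p.2) ⁻¹' Ico (1:ℝ) 3) ∩
      ((fun p : ℝ × ℝ => p.2) ⁻¹' Ico (0:ℝ) 1) ∩
      ((fun p : ℝ × ℝ => p.1 + 2*p.2) ⁻¹' Ico (2:ℝ) 4) ∩
      ((fun p : ℝ × ℝ => p.1) ⁻¹' Ici (0:ℝ)) := by
    ext ⟨x, y⟩; simp only [D1, mem_setOf_eq, mem_inter_iff, mem_preimage, mem_Ico, mem_Ici]; tauto
  rw [this]
  exact ((((measurable_fst.add measurable_snd) measurableSet_Ico).inter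
    (measurable_snd measurableSet_Ico)).inter
    ((measurable_fst.add (measurable_snd.const_mul 2)) measurableSet_Ico)).inter
    (measurable_fst measurableSet_Ici)

lemma mD2 : MeasurableSet D2 := by
  have : D2 = ((fun p : ℝ × ℝ => p.1 + p.2) ⁻¹' Ico (3:ℝ) 5) ∩
      ((fun p : ℝ × ℝ => p.2) ⁻¹' Ico (-1:ℝ) 1) ∩
      ((fun p : ℝ × ℝ => p.1 + 2*p.2) ⁻¹' Ico (3:ℝ) 5) ∩
      ((fun p : ℝ × ℝ => p.1) ⁻¹' Iio (3:ℝ)) := by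
    ext ⟨x, y⟩; simp only [D2, mem_setOf_eq, mem_inter_iff, mem_preimage, mem_Ico, mem_Iio]; tauto
  rw [this]
  exact ((((measurable_fst.add measurable_snd) measurableSet_Ico).inter
    (measurable_snd measurableSet_Ico)).inter
    ((measurable_fst.add (measurable_snd.const_mul 2)) measurableSet_Ico)).inter
    (measurable_fst measurableSet_Iio)

lemma mC0 : MeasurableSet C0 := mSset.inter
  ((measurable_fst measurableSet_Ici).inter (measurable_snd measurableSet_Ici))
lemma mC1 : MeasurableSet C1 := mSset.inter
  ((measurable_fst measurableSet_Ici).inter (measurable_snd measurableSet_Iio))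
lemma mC2 : MeasurableSet C2 := mSset.inter (measurable_fst measurableSet_Iio)

lemma mpA : MeasurePreserving Amap (volume : Measure (ℝ × ℝ)) volume := by
  have h1 : MeasurePreserving (fun z : ℝ × ℝ => (z.1 - z.2, z.2))
      (volume : Measure (ℝ×ℝ)) volume := by
    have h := measurePreserving_sub_prod (volume : Measure ℝ) (volume : Measure ℝ)
    rwa [← Measure.volume_eq_prod] at h
  have h2 : MeasurePreserving (· + ((1:ℝ), (0:ℝ))) (volume : Measure (ℝ×ℝ)) volume :=
    measurePreserving_add_right volume _
  have : Amap = (· + ((1:ℝ), (0:ℝ))) ∘ (fun z : ℝ × ℝ => (z.1 - z.2, z.2)) := by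
    funext p; simp [Amap, Prod.ext_iff]
  rw [this]
  exact h2.comp h1

lemma A_preim : Amap ⁻¹' Sset = Hex := by
  ext ⟨x, y⟩
  simp only [Amap, Sset, Hex, mem_preimage, mem_setOf_eq]
  constructor <;> rintro ⟨h1, h2, h3, h4, h5, h6⟩ <;>
    exact ⟨by linarith, by linarith, by linarith, by linarith, by linarith, by linarith⟩

lemma mpA' : MeasurePreserving Amap (volume.restrict Hex) (volume.restrict Sset) := by
  have h := mpA.restrict_preimage mSset
  rwa [A_preim] at h

lemma Sset_decomp : Sset = C0 ∪ C1 ∪ C2 := by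
  ext ⟨x, y⟩
  simp only [C0, C1, C2, Sset, mem_union, mem_inter_iff, mem_setOf_eq]
  constructor
  · rintro ⟨h1, h2, h3, h4, h5, h6⟩
    rcases lt_or_ge x 0 with hx | hx
    · exact Or.inr ⟨⟨h1, h2, h3, h4, h5, h6⟩, hx⟩
    · rcases lt_or_ge y 0 with hy | hy
      · exact Or.inl (Or.inr ⟨⟨h1, h2, h3, h4, h5, h6⟩, hx, hy⟩)
      · exact Or.inl (Or.inl ⟨⟨h1, h2, h3, h4, h5, h6⟩, hx, hy⟩)
  · rintro ((⟨h, _⟩ | ⟨h, _⟩) | ⟨h, _⟩) <;> exact h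

lemma Rset_decomp : Rset = C0 ∪ D1 ∪ D2 := by
  ext ⟨x, y⟩
  simp only [Rset, C0, Sset, D1, D2, mem_union, mem_inter_iff, mem_setOf_eq, mem_prod, mem_Ico]
  constructor
  · rintro ⟨⟨hx0, hx3⟩, hy0, hy1⟩
    rcases lt_or_ge (x + 2*y) 2 with h2 | h2
    · exact Or.inl (Or.inl ⟨⟨by linarith, by linarith, by linarith, by linarith, by linarith,
        by linarith⟩, hx0, hy0⟩)
    · rcases lt_or_ge (x + y) 3 with h3 | h3
      · exact Or.inl (Or.inr ⟨by linarith, by linarith, by linarith, by linarith, by linarith,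
          by linarith, by linarith⟩)
      · exact Or.inr ⟨by linarith, by linarith, by linarith, by linarith, by linarith,
          by linarith, by linarith⟩
  · rintro ((⟨⟨h1, h2, h3, h4, h5, h6⟩, hx, hy⟩ | ⟨h1, h2, h3, h4, h5, h6, h7⟩) |
      ⟨h1, h2, h3, h4, h5, h6, h7⟩)
    · exact ⟨⟨by linarith, by linarith⟩, by linarith, by linarith⟩
    · exact ⟨⟨by linarith, by linarith⟩, by linarith, by linarith⟩
    · exact ⟨⟨by linarith, by linarith⟩, by linarith, by linarith⟩

lemma C1_preim : (· + ((0:ℝ), (1:ℝ))) ⁻¹' D1 = C1 := by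
  ext ⟨x, y⟩
  simp only [D1, C1, Sset, mem_preimage, mem_inter_iff, mem_setOf_eq, Prod.mk_add_mk,
    Prod.fst_add, Prod.snd_add]
  constructor
  · rintro ⟨h1, h2, h3, h4, h5, h6, h7⟩
    exact ⟨⟨by linarith, by linarith, by linarith, by linarith, by linarith, by linarith⟩,
      by linarith, by linarith⟩
  · rintro ⟨⟨h1, h2, h3, h4, h5, h6⟩, hx, hy⟩
    exact ⟨by linarith, by linarith, by linarith, by linarith, by linarith, by linarith,
      by linarith⟩

lemma C2_preim : (· + ((3:ℝ), (0:ℝ))) ⁻¹' D2 = C2 := by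
  ext ⟨x, y⟩
  simp only [D2, C2, Sset, mem_preimage, mem_inter_iff, mem_setOf_eq, Prod.mk_add_mk,
    Prod.fst_add, Prod.snd_add]
  constructor
  · rintro ⟨h1, h2, h3, h4, h5, h6, h7⟩
    exact ⟨⟨by linarith, by linarith, by linarith, by linarith, by linarith, by linarith⟩,
      by linarith⟩
  · rintro ⟨⟨h1, h2, h3, h4, h5, h6⟩, hx⟩
    exact ⟨by linarith, by linarith, by linarith, by linarith, by linarith, by linarith,
      by linarith⟩

lemma P_eq_C0 : EqOn Pmap id C0 := by
  rintro ⟨x, y⟩ ⟨_, hx, hy⟩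
  simp only [Pmap, id_eq, Prod.mk.injEq]
  rw [if_neg (not_lt.2 hx), if_neg (not_lt.2 hy)]
  constructor <;> ring

lemma P_eq_C1 : EqOn Pmap (· + ((0:ℝ), (1:ℝ))) C1 := by
  rintro ⟨x, y⟩ ⟨_, hx, hy⟩
  simp only [Pmap, Prod.mk_add_mk, Prod.mk.injEq]
  rw [if_neg (not_lt.2 hx), if_pos hy]
  constructor <;> ring

lemma P_eq_C2 : EqOn Pmap (· + ((3:ℝ), (0:ℝ))) C2 := by
  rintro ⟨x, y⟩ ⟨hS, hx⟩
  simp only [Sset, mem_setOf_eq] at hS hx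
  have hy : ¬ y < 0 := by intro h; linarith [hS.2.2.2.2.1]
  simp only [Pmap, Prod.mk_add_mk, Prod.mk.injEq]
  rw [if_pos hx, if_neg hy]
  constructor <;> ring

lemma disj01 : Disjoint C0 C1 := by
  rw [disjoint_left]; rintro ⟨x, y⟩ ⟨_, _, hy⟩ ⟨_, _, hy'⟩; exact absurd hy (not_le.2 hy')

lemma disj02 : Disjoint (C0 ∪ C1) C2 := by
  rw [disjoint_left]
  rintro ⟨x, y⟩ (⟨_, hx, _⟩ | ⟨_, hx, _⟩) ⟨_, hx'⟩ <;> exact absurd hx (not_le.2 hx')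

lemma disjD01 : Disjoint C0 D1 := by
  rw [disjoint_left]
  rintro ⟨x, y⟩ ⟨⟨_, _, _, _, _, h6⟩, _⟩ ⟨_, _, _, _, h5', _⟩
  simp only [mem_setOf_eq] at *; linarith

lemma disjD02 : Disjoint (C0 ∪ D1) D2 := by
  rw [disjoint_left]
  rintro ⟨x, y⟩ h ⟨h1', _, _, _, h5', _⟩
  simp only [mem_setOf_eq] at *
  rcases h with ⟨⟨_, _, _, _, _, h6⟩, _⟩ | ⟨_, h2, _⟩ <;> linarith

lemma map_P : Measure.map Pmap (volume.restrict Sset) = volume.restrict Rset := by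
  have hdecomp : volume.restrict Sset
      = volume.restrict C0 + volume.restrict C1 + volume.restrict C2 := by
    rw [Sset_decomp, Measure.restrict_union disj02 mC2,
      Measure.restrict_union disj01 mC1]
  have h0 : Measure.map Pmap (volume.restrict C0) = volume.restrict C0 := by
    rw [Measure.map_congr ((ae_restrict_iff' mC0).2 (ae_of_all _ fun p hp => P_eq_C0 hp)),
      Measure.map_id]
  have h1 : Measure.map Pmap (volume.restrict C1) = volume.restrict D1 := by
    rw [Measure.map_congr ((ae_restrict_iff' mC1).2 (ae_of_all _ fun p hp => P_eq_C1 hp))]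
    have h := (measurePreserving_add_right (volume : Measure (ℝ×ℝ)) ((0:ℝ),(1:ℝ))).restrict_preimage mD1
    rw [C1_preim] at h
    exact h.map_eq
  have h2 : Measure.map Pmap (volume.restrict C2) = volume.restrict D2 := by
    rw [Measure.map_congr ((ae_restrict_iff' mC2).2 (ae_of_all _ fun p hp => P_eq_C2 hp))]
    have h := (measurePreserving_add_right (volume : Measure (ℝ×ℝ)) ((3:ℝ),(0:ℝ))).restrict_preimage mD2
    rw [C2_preim] at h
    exact h.map_eq
  rw [hdecomp, Measure.map_add _ _ measurable_Pmap, Measure.map_add _ _ measurable_Pmap,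
    h0, h1, h2, Rset_decomp, Measure.restrict_union disjD02 mD2,
    Measure.restrict_union disjD01 mD1]

lemma mpQ : MeasurePreserving Qmap (volume.restrict Hex) (volume.restrict Rset) :=
  MeasurePreserving.comp ⟨measurable_Pmap, map_P⟩ mpA'

lemma SQ_eq : ∀ t ∈ Hex, Smap (Qmap t) = t := by
  rintro ⟨x, y⟩ ⟨h1, h2, h3, h4, h5, h6⟩
  simp only [Qmap, Function.comp_apply, Amap, Pmap, Smap]
  rcases lt_or_ge (x - y + 1) 0 with hu | hu
  · -- u < 0, then y ≥ 0 is automatic? need x < -1 + y ≤ ... y ≥ 0 since x ≥ -1 gives y > ... 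
    have hy : ¬ y < 0 := by intro h; linarith
    simp only [hu, hy, if_true, if_false]
    have c1 : ¬ (x - y + 1 + 3 + 2 * (y + 0) < 2) := by push_neg; linarith
    have c2 : ¬ (x - y + 1 + 3 + (y + 0) < 3) := by push_neg; linarith
    rw [if_neg c1, if_neg c2]
    simp only [Prod.mk.injEq]; constructor <;> ring
  · simp only [not_lt.2 hu, if_false]
    rcases lt_or_ge y 0 with hy | hy
    · simp only [hy, if_true]
      have c1 : ¬ (x - y + 1 + 0 + 2 * (y + 1) < 2) := by push_neg; linarith
      have c2 : x - y + 1 + 0 + (y + 1) < 3 := by linarith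
      rw [if_neg c1, if_pos c2]
      simp only [Prod.mk.injEq]; constructor <;> ring
    · simp only [not_lt.2 hy, if_false]
      have c1 : x - y + 1 + 0 + 2 * (y + 0) < 2 := by linarith
      rw [if_pos c1]
      simp only [Prod.mk.injEq]; constructor <;> ring

lemma mpS : MeasurePreserving Smap (volume.restrict Rset) (volume.restrict Hex) := by
  refine ⟨measurable_Smap, ?_⟩
  rw [← mpQ.map_eq, Measure.map_map measurable_Smap measurable_Qmap]
  have hae : Smap ∘ Qmap =ᵐ[volume.restrict Hex] id :=
    (ae_restrict_iff' mHex).2 (ae_of_all _ fun t ht => SQ_eq t ht)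
  rw [Measure.map_congr hae, Measure.map_id]

/-! ### Fourier analysis on `AddCircle 3 × AddCircle 1` -/

open AddCircle Submodule

instance fact3 : Fact ((0:ℝ) < 3) := ⟨by norm_num⟩
instance fact1 : Fact ((0:ℝ) < 1) := ⟨by norm_num⟩

abbrev G2 := AddCircle (3:ℝ) × AddCircle (1:ℝ)

def nuG : Measure G2 :=
  (haarAddCircle (T := 3)).prod (haarAddCircle (T := 1))

instance : IsProbabilityMeasure nuG := by
  unfold nuG; infer_instance

def chG (n : ℤ × ℤ) : C(G2, ℂ) :=
  ((fourier n.1).comp ⟨Prod.fst, continuous_fst⟩) * ((fourier n.2).comp ⟨Prod.snd, continuous_snd⟩)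

lemma chG_apply (n : ℤ × ℤ) (z : G2) : chG n z = fourier n.1 z.1 * fourier n.2 z.2 := rfl

lemma chG_zero : chG 0 = 1 := by
  ext z
  simp [chG_apply, fourier_zero]

lemma chG_add (m n : ℤ × ℤ) : chG (m + n) = chG m * chG n := by
  ext z
  simp only [chG_apply, Prod.fst_add, Prod.snd_add, fourier_add, ContinuousMap.mul_apply,
    chG_apply]
  ring

lemma chG_star (n : ℤ × ℤ) : star (chG n) = chG (-n) := by
  ext z
  simp only [ContinuousMap.star_apply, chG_apply, RCLike.star_def, map_mul, Prod.fst_neg,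
    Prod.snd_neg, fourier_neg]

def chAlg : StarSubalgebra ℂ C(G2, ℂ) where
  toSubalgebra := Algebra.adjoin ℂ (Set.range chG)
  star_mem' := by
    show Algebra.adjoin ℂ (Set.range chG) ≤ star (Algebra.adjoin ℂ (Set.range chG))
    refine Algebra.adjoin_le ?_
    rintro - ⟨n, rfl⟩
    show chG n ∈ star (Algebra.adjoin ℂ (Set.range chG))
    rw [Subalgebra.mem_star_iff]
    exact chG_star n ▸ Algebra.subset_adjoin ⟨-n, rfl⟩

lemma chAlg_coe :
    Subalgebra.toSubmodule chAlg.toSubalgebra = span ℂ (Set.range chG) := by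
  apply Algebra.adjoin_eq_span_of_subset
  refine Set.Subset.trans ?_ Submodule.subset_span
  intro x hx
  refine Submonoid.closure_induction (fun _ => id) ⟨0, chG_zero⟩ ?_ hx
  rintro - - - - ⟨m, rfl⟩ ⟨n, rfl⟩
  exact ⟨m + n, chG_add m n⟩

lemma chAlg_separatesPoints : chAlg.SeparatesPoints := by
  intro z w hzw
  by_cases h1 : z.1 = w.1
  · have h2 : z.2 ≠ w.2 := fun h => hzw (Prod.ext h1 h)
    refine ⟨_, ⟨chG (0, 1), Algebra.subset_adjoin ⟨(0, 1), rfl⟩, rfl⟩, ?_⟩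
    dsimp only
    rw [chG_apply, chG_apply, fourier_zero, fourier_zero, one_mul, one_mul, fourier_one,
      fourier_one]
    intro h
    have h := Circle.ext h
    exact h2 (injective_toCircle (one_pos (α := ℝ)).ne' h)
  · refine ⟨_, ⟨chG (1, 0), Algebra.subset_adjoin ⟨(1, 0), rfl⟩, rfl⟩, ?_⟩
    dsimp only
    rw [chG_apply, chG_apply, fourier_zero, fourier_zero, mul_one, mul_one, fourier_one,
      fourier_one]
    intro h
    have h := Circle.ext h
    exact h1 (injective_toCircle (by norm_num : (3:ℝ) ≠ 0) h)

lemma chAlg_closure_eq_top : chAlg.topologicalClosure = ⊤ :=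
  ContinuousMap.starSubalgebra_topologicalClosure_eq_top_of_separatesPoints chAlg
    chAlg_separatesPoints

lemma span_chG_closure_eq_top : (span ℂ (Set.range chG)).topologicalClosure = ⊤ := by
  rw [← chAlg_coe]
  exact congr_arg (Subalgebra.toSubmodule <| StarSubalgebra.toSubalgebra ·) chAlg_closure_eq_top

def chLp (n : ℤ × ℤ) : Lp ℂ 2 nuG :=
  ContinuousMap.toLp (E := ℂ) 2 nuG ℂ (chG n)

lemma span_chLp_closure_eq_top :
    (span ℂ (Set.range chLp)).topologicalClosure = ⊤ := by
  convert (ContinuousMap.toLp_denseRange ℂ nuG ℂ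
      (by norm_num : (2:ENNReal) ≠ ⊤)).topologicalClosure_map_submodule span_chG_closure_eq_top
  · rfl
  erw [map_span, Set.range_comp]
  simp only [ContinuousLinearMap.coe_coe]

lemma inner_fourier {T : ℝ} [hT : Fact (0 < T)] (a b : ℤ) :
    ∫ x : AddCircle T, (starRingEnd ℂ) (fourier a x) * fourier b x ∂haarAddCircle
      = if a = b then 1 else 0 := by
  have h := orthonormal_iff_ite.mp (@orthonormal_fourier T hT) a b
  rw [ContinuousMap.inner_toLp] at h
  refine Eq.trans ?_ h; congr 1; funext x; ring

lemma integral_fourier {T : ℝ} [Fact (0 < T)] (n : ℤ) :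
    ∫ x : AddCircle T, fourier n x ∂haarAddCircle = if n = 0 then 1 else 0 := by
  have h := inner_fourier (T := T) (-n) 0
  simp only [fourier_neg, Complex.conj_conj, fourier_zero, mul_one, neg_eq_zero] at h
  exact h

lemma integral_chG (n : ℤ × ℤ) :
    ∫ z, chG n z ∂nuG = if n = 0 then 1 else 0 := by
  have : ∫ z, chG n z ∂nuG
      = (∫ x : AddCircle (3:ℝ), fourier n.1 x ∂haarAddCircle) * ∫ y : AddCircle (1:ℝ), fourier n.2 y ∂haarAddCircle := by
    rw [nuG, ← MeasureTheory.integral_prod_mul]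
    rfl
  rw [this, integral_fourier, integral_fourier]
  rcases eq_or_ne n 0 with h | h
  · subst h; simp
  · by_cases h1 : n.1 = 0
    · have h2 : n.2 ≠ 0 := fun h2 => h (Prod.ext h1 h2)
      simp [h1, h2, h]
    · simp [h1, h]

lemma orthonormal_chLp : Orthonormal ℂ chLp := by
  rw [orthonormal_iff_ite]
  intro i j
  rw [chLp, chLp, ContinuousMap.inner_toLp]
  have : ∀ z : G2, chG j z * (starRingEnd ℂ) (chG i z) = chG (j - i) z := by
    intro z
    simp only [chG_apply, map_mul]
    have e1 : (j - i).1 = j.1 + -i.1 := by simp [sub_eq_add_neg]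
    have e2 : (j - i).2 = j.2 + -i.2 := by simp [sub_eq_add_neg]
    rw [e1, e2, fourier_add, fourier_add, fourier_neg, fourier_neg]
    ring
  simp_rw [this]
  rw [integral_chG]
  by_cases h : i = j
  · simp [h]
  · have : j - i ≠ 0 := fun hc => h (by
      have := sub_eq_zero.mp hc; exact this.symm)
    simp [h, this]

def hbG : HilbertBasis (ℤ × ℤ) ℂ (Lp ℂ 2 nuG) :=
  HilbertBasis.mk orthonormal_chLp (by rw [span_chLp_closure_eq_top])

lemma complete_G (H : G2 → ℂ) (hH : MemLp H 2 nuG)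
    (hz : ∀ n : ℤ × ℤ, ∫ z, H z * (starRingEnd ℂ) (chG n z) ∂nuG = 0) :
    H =ᵐ[nuG] 0 := by
  have hrepr : ∀ n, hbG.repr (hH.toLp H) n = 0 := by
    intro n
    rw [hbG.repr_apply_apply]
    have hcoe : ⇑(hbG n) =ᵐ[nuG] chG n := by
      rw [hbG, HilbertBasis.coe_mk]
      exact ContinuousMap.coeFn_toLp _ _
    have hcoe2 : ⇑(hH.toLp H) =ᵐ[nuG] H := hH.coeFn_toLp
    have : (inner ℂ (hbG n) (hH.toLp H) : ℂ)
        = ∫ z, (starRingEnd ℂ) (chG n z) * H z ∂nuG := by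
      rw [MeasureTheory.L2.inner_def]
      apply integral_congr_ae
      filter_upwards [hcoe, hcoe2] with z h1 h2
      rw [h1, h2, RCLike.inner_apply, mul_comm]
    rw [this, ← hz n]
    apply integral_congr_ae
    filter_upwards with z using mul_comm _ _
  have hL : hH.toLp H = 0 := by
    apply hbG.repr.injective
    ext n
    simp [hrepr n]
  have hcoe := hH.coeFn_toLp
  rw [hL] at hcoe
  exact (hcoe.symm.trans (Lp.coeFn_zero ℂ 2 nuG))

/-! ### from the plane to the torus -/

def Mmap : ℝ × ℝ → G2 :=
  fun p => ((p.1 : AddCircle (3:ℝ)), (p.2 : AddCircle (1:ℝ)))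

lemma continuous_Mmap : Continuous Mmap :=
  ((AddCircle.continuous_mk' 3).comp continuous_fst).prodMk
    ((AddCircle.continuous_mk' 1).comp continuous_snd)

lemma measurable_Mmap : Measurable Mmap := continuous_Mmap.measurable

lemma smul_prod {X Y : Type*} [MeasurableSpace X] [MeasurableSpace Y] (c : ENNReal) (hc : c ≠ ⊤)
    (μ : Measure X) (ν : Measure Y) [IsFiniteMeasure μ] [SigmaFinite ν] :
    (c • μ).prod ν = c • μ.prod ν := by
  haveI : IsFiniteMeasure (c • μ) := by
    constructor
    rw [Measure.smul_apply, smul_eq_mul]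
    exact ENNReal.mul_lt_top hc.lt_top (measure_lt_top μ _)
  apply Measure.prod_eq (μ := c • μ) (ν := ν)
  intro s t hs ht
  rw [Measure.smul_apply, Measure.prod_prod, Measure.smul_apply, smul_eq_mul, smul_eq_mul,
    mul_assoc]

lemma boxEq : volume.restrict Rset
    = (volume.restrict (Ioc (0:ℝ) 3)).prod (volume.restrict (Ioc (0:ℝ) 1)) := by
  rw [Rset, Measure.volume_eq_prod, ← Measure.prod_restrict,
    Measure.restrict_congr_set Ico_ae_eq_Ioc, Measure.restrict_congr_set Ico_ae_eq_Ioc]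

lemma mpM : MeasurePreserving Mmap
    ((volume.restrict (Ioc (0:ℝ) 3)).prod (volume.restrict (Ioc (0:ℝ) 1)))
    (ENNReal.ofReal 3 • nuG) := by
  have h3 := AddCircle.measurePreserving_mk (T := 3) 0
  have h1 := AddCircle.measurePreserving_mk (T := 1) 0
  rw [zero_add] at h3 h1
  have hp := h3.prod h1
  have hvol : (volume : Measure (AddCircle (3:ℝ))).prod (volume : Measure (AddCircle (1:ℝ)))
      = ENNReal.ofReal 3 • nuG := by
    rw [AddCircle.volume_eq_smul_haarAddCircle, AddCircle.volume_eq_smul_haarAddCircle,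
      ENNReal.ofReal_one, one_smul, smul_prod _ (by norm_num)]
    rfl
  rw [hvol] at hp
  have : Mmap = Prod.map (fun x : ℝ => (x : AddCircle (3:ℝ)))
      (fun y : ℝ => (y : AddCircle (1:ℝ))) := by
    funext p; rfl
  rw [this]
  exact hp

lemma hmapQG : Measure.map (Mmap ∘ Qmap) (volume.restrict Hex) = ENNReal.ofReal 3 • nuG := by
  rw [← Measure.map_map measurable_Mmap measurable_Qmap, mpQ.map_eq, boxEq, mpM.map_eq]

lemma M_P : ∀ p : ℝ × ℝ, Mmap (Pmap p) = Mmap p := by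
  intro p
  unfold Mmap Pmap
  apply Prod.ext
  · by_cases h : p.1 < 0
    · simp only [if_pos h]
      exact AddCircle.coe_add_period 3 p.1
    · simp only [if_neg h, add_zero]
  · by_cases h : p.2 < 0
    · simp only [if_pos h]
      exact AddCircle.coe_add_period 1 p.2
    · simp only [if_neg h, add_zero]

lemma M_Q (t : ℝ × ℝ) : Mmap (Qmap t) = Mmap (Amap t) := M_P (Amap t)

def idx (j : ℤ × ℤ) : ℤ × ℤ := (2*j.1 + j.2, j.1 + j.2)

lemma idx_inj {k j : ℤ × ℤ} (h : idx k = idx j) : k = j := by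
  simp only [idx, Prod.mk.injEq] at h
  obtain ⟨h1, h2⟩ := h
  have : k.1 = j.1 := by omega
  have : k.2 = j.2 := by omega
  exact Prod.ext ‹k.1 = j.1› ‹k.2 = j.2›

lemma phi_factor (j : ℤ × ℤ) (t : ℝ × ℝ) :
    phiH j t = Complex.exp (-(2*(Real.pi:ℂ)*Complex.I*(2*j.1+j.2)/3))
      * chG (idx j) (Mmap (Amap t)) := by
  rw [chG_apply]
  show _ = _ * ((fourier (idx j).1 ((t.1 - t.2 + 1 : ℝ) : AddCircle (3:ℝ)))
      * fourier (idx j).2 ((t.2 : ℝ) : AddCircle (1:ℝ)))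
  rw [fourier_coe_apply, fourier_coe_apply, phiH, ← Complex.exp_add, ← Complex.exp_add]
  congr 1
  simp only [idx]
  push_cast
  field_simp
  ring

lemma chG_mul_conj (m n : ℤ × ℤ) (z : G2) :
    chG m z * (starRingEnd ℂ) (chG n z) = chG (m - n) z := by
  simp only [chG_apply, map_mul]
  have e1 : (m - n).1 = m.1 + -n.1 := by simp [sub_eq_add_neg]
  have e2 : (m - n).2 = m.2 + -n.2 := by simp [sub_eq_add_neg]
  rw [e1, e2, fourier_add, fourier_add, fourier_neg, fourier_neg]
  ring

lemma hexVol_eq : hexVol = 3 := by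
  have h2 := congrArg (fun μ : Measure (ℝ × ℝ) => μ Set.univ) mpQ.map_eq
  simp only [Measure.map_apply measurable_Qmap MeasurableSet.univ, Set.preimage_univ,
    Measure.restrict_apply_univ] at h2
  have h3 : volume Rset = ENNReal.ofReal 3 := by
    rw [Rset, Measure.volume_eq_prod, Measure.prod_prod, Real.volume_Ico, Real.volume_Ico]
    rw [← ENNReal.ofReal_mul (by norm_num)]
    norm_num
  rw [hexVol, h2, h3, ENNReal.toReal_ofReal (by norm_num)]

lemma key_integral (d : ℤ × ℤ) :
    (∫ t in Hex, chG d (Mmap (Amap t))) = (3:ℂ) * (if d = 0 then 1 else 0) := by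
  have h1 : (∫ t in Hex, chG d (Mmap (Amap t)))
      = ∫ t in Hex, (fun z => chG d z) ((Mmap ∘ Qmap) t) := by
    apply integral_congr_ae
    filter_upwards with t
    simp only [Function.comp_apply, M_Q]
  rw [h1, ← MeasureTheory.integral_map (f := fun z => chG d z)
    ((measurable_Mmap.comp measurable_Qmap).aemeasurable)
    ((chG d).continuous.aestronglyMeasurable), hmapQG, integral_smul_measure,
    ENNReal.toReal_ofReal (by norm_num), integral_chG]
  rw [Complex.real_smul]
  norm_num

lemma exp_mul_conj_self (w : ℂ) (hw : (starRingEnd ℂ) w = -w) :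
    Complex.exp w * (starRingEnd ℂ) (Complex.exp w) = 1 := by
  rw [← Complex.exp_conj, hw, ← Complex.exp_add, add_neg_cancel, Complex.exp_zero]

lemma conj_two_pi_I (a : ℤ) :
    (starRingEnd ℂ) (-(2*(Real.pi:ℂ)*Complex.I*(a:ℂ)/3)) = -(-(2*(Real.pi:ℂ)*Complex.I*(a:ℂ)/3)) := by
  simp only [map_neg, map_div₀, map_mul, Complex.conj_I, Complex.conj_ofReal, map_ofNat,
    map_intCast]
  ring

lemma continuous_conj_chG (n : ℤ × ℤ) : Continuous fun z : G2 => (starRingEnd ℂ) (chG n z) :=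
  Complex.continuous_conj.comp (chG n).continuous

lemma chG_eq_exp_mul_phi (n : ℤ × ℤ) (t : ℝ × ℝ) :
    chG n (Mmap (Amap t))
      = Complex.exp (2*(Real.pi:ℂ)*Complex.I*(n.1:ℂ)/3) * phiH (n.1 - n.2, 2*n.2 - n.1) t := by
  set j : ℤ × ℤ := (n.1 - n.2, 2*n.2 - n.1) with hj
  have hidx : idx j = n := by
    rw [Prod.ext_iff]
    constructor <;> simp only [idx, hj] <;> ring
  have hcast : (2*(j.1:ℂ) + (j.2:ℂ)) = (n.1:ℂ) := by
    rw [hj]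
    push_cast
    ring
  rw [phi_factor j t, hidx, hcast, ← mul_assoc, ← Complex.exp_add]
  rw [show (2*(Real.pi:ℂ)*Complex.I*(n.1:ℂ)/3 + -(2*(Real.pi:ℂ)*Complex.I*(n.1:ℂ)/3)) = 0 by ring,
    Complex.exp_zero, one_mul]

end StmtAux

open StmtAux in
/-- the functions `φ_j`, `j ∈ ℤ³_H`, form a complete orthonormal system in
`L²(Ω)` with respect to `⟨f,g⟩ = (1/|Ω|)∫_Ω f conj(g)`: they are orthonormal, and any
`f ∈ L²(Ω)` orthogonal to all of them vanishes. -/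
theorem stmt0 :
    (∀ k j : ℤ × ℤ,
      (1 / hexVol : ℂ) * ∫ t in Hex, phiH k t * conj (phiH j t) =
        if k = j then 1 else 0) ∧
    (∀ f : MeasureTheory.Lp ℂ 2 (MeasureTheory.volume.restrict Hex),
      (∀ j : ℤ × ℤ, ∫ t in Hex, (f : ℝ × ℝ → ℂ) t * conj (phiH j t) = 0) → f = 0) := by
  constructor
  · -- orthonormality
    intro k j
    have hprod : ∀ t : ℝ × ℝ, phiH k t * conj (phiH j t)
        = (Complex.exp (-(2*(Real.pi:ℂ)*Complex.I*(2*k.1+k.2)/3))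
            * conj (Complex.exp (-(2*(Real.pi:ℂ)*Complex.I*(2*j.1+j.2)/3))))
          * chG (idx k - idx j) (Mmap (Amap t)) := by
      intro t
      rw [phi_factor k t, phi_factor j t, ← chG_mul_conj (idx k) (idx j) (Mmap (Amap t)), map_mul]
      ring
    rw [show (∫ t in Hex, phiH k t * conj (phiH j t))
        = ∫ t in Hex, (Complex.exp (-(2*(Real.pi:ℂ)*Complex.I*(2*k.1+k.2)/3))
            * conj (Complex.exp (-(2*(Real.pi:ℂ)*Complex.I*(2*j.1+j.2)/3))))
          * chG (idx k - idx j) (Mmap (Amap t)) from integral_congr_ae (ae_of_all _ hprod)]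
    rw [MeasureTheory.integral_const_mul, key_integral]
    rcases eq_or_ne k j with rfl | hkj
    · rw [if_pos rfl, sub_self, if_pos rfl]
      have hc := exp_mul_conj_self (-(2*(Real.pi:ℂ)*Complex.I*((2*k.1+k.2 : ℤ):ℂ)/3))
        (conj_two_pi_I (2*k.1+k.2))
      push_cast at hc
      rw [hc, hexVol_eq]
      norm_num
    · have hd : idx k - idx j ≠ 0 := fun hzero => hkj (idx_inj (sub_eq_zero.mp hzero))
      rw [if_neg hd, if_neg hkj]
      simp
  · -- completeness
    intro f hf
    set h : ℝ × ℝ → ℂ := ⇑f ∘ Smap with hh_def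
    have measurable_h : Measurable h := (Lp.stronglyMeasurable f).measurable.comp measurable_Smap
    have hmem_h : MemLp h 2 (volume.restrict Rset) := (Lp.memLp f).comp_measurePreserving mpS
    set μbox : Measure (ℝ × ℝ) :=
      (volume.restrict (Ioc (0:ℝ) 3)).prod (volume.restrict (Ioc (0:ℝ) 1)) with hμbox
    have hmem_h' : MemLp h 2 μbox := by rwa [boxEq] at hmem_h
    -- the inverse of Mmap on the box
    set W : G2 → ℝ × ℝ := fun z =>
      (((AddCircle.equivIoc 3 0 z.1 : Set.Ioc (0:ℝ) (0+3)) : ℝ),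
       ((AddCircle.equivIoc 1 0 z.2 : Set.Ioc (0:ℝ) (0+1)) : ℝ)) with hW_def
    have measurable_W : Measurable W := by
      apply Measurable.prodMk
      · exact measurable_subtype_coe.comp
          ((AddCircle.measurableEquivIoc 3 0).measurable.comp measurable_fst)
      · exact measurable_subtype_coe.comp
          ((AddCircle.measurableEquivIoc 1 0).measurable.comp measurable_snd)
    have hWM : ∀ p ∈ (Ioc (0:ℝ) 3 ×ˢ Ioc (0:ℝ) 1), W (Mmap p) = p := by
      rintro ⟨x, y⟩ ⟨hx, hy⟩
      have e3 : AddCircle.equivIoc 3 0 ((x : ℝ) : AddCircle (3:ℝ)) = ⟨x, by simpa using hx⟩ := by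
        rw [Equiv.apply_eq_iff_eq_symm_apply]; rfl
      have e1 : AddCircle.equivIoc 1 0 ((y : ℝ) : AddCircle (1:ℝ)) = ⟨y, by simpa using hy⟩ := by
        rw [Equiv.apply_eq_iff_eq_symm_apply]; rfl
      simp only [hW_def, Mmap, e3, e1]
    set H : G2 → ℂ := h ∘ W with hH_def
    have measurable_H : Measurable H := measurable_h.comp measurable_W
    have hboxr : μbox = (volume : Measure (ℝ×ℝ)).restrict (Ioc (0:ℝ) 3 ×ˢ Ioc (0:ℝ) 1) := by
      rw [hμbox, Measure.volume_eq_prod, Measure.prod_restrict]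
    have hHM : (fun p : ℝ × ℝ => H (Mmap p)) =ᵐ[μbox] h := by
      rw [hboxr]
      refine (ae_restrict_iff' (measurableSet_Ioc.prod measurableSet_Ioc)).2 (ae_of_all _ ?_)
      intro p hp
      simp only [hH_def, Function.comp_apply, hWM p hp]
    have hle : nuG ≤ ENNReal.ofReal 3 • nuG := by
      refine Measure.le_iff.2 fun s hs => ?_
      rw [Measure.smul_apply, smul_eq_mul]
      exact le_mul_of_one_le_left zero_le (ENNReal.one_le_ofReal.mpr (by norm_num))
    have hnorm : eLpNorm H 2 nuG ≤ eLpNorm h 2 μbox := by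
      calc eLpNorm H 2 nuG ≤ eLpNorm H 2 (ENNReal.ofReal 3 • nuG) :=
            eLpNorm_mono_measure _ hle
        _ = eLpNorm (H ∘ Mmap) 2 μbox :=
            (eLpNorm_comp_measurePreserving measurable_H.aestronglyMeasurable mpM).symm
        _ = eLpNorm h 2 μbox := eLpNorm_congr_ae hHM
    have hmemH : MemLp H 2 nuG :=
      ⟨measurable_H.aestronglyMeasurable, lt_of_le_of_lt hnorm hmem_h'.2⟩
    have hcoef : ∀ n : ℤ × ℤ, ∫ z, H z * conj (chG n z) ∂nuG = 0 := by
      intro n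
      have hI3 : ∫ z, H z * conj (chG n z) ∂(ENNReal.ofReal 3 • nuG)
          = ∫ p, H (Mmap p) * conj (chG n (Mmap p)) ∂μbox := by
        rw [← mpM.map_eq]
        exact integral_map mpM.aemeasurable
          (measurable_H.mul ((continuous_conj_chG n).measurable)).aestronglyMeasurable
      have hI3b : (∫ p, H (Mmap p) * conj (chG n (Mmap p)) ∂μbox)
          = ∫ p in Rset, h p * conj (chG n (Mmap p)) := by
        rw [show (∫ p in Rset, h p * conj (chG n (Mmap p)))
            = ∫ p, h p * conj (chG n (Mmap p)) ∂μbox from by rw [boxEq]]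
        apply integral_congr_ae
        filter_upwards [hHM] with p hp
        rw [hp]
      have hI3c : (∫ p in Rset, h p * conj (chG n (Mmap p)))
          = ∫ t in Hex, h (Qmap t) * conj (chG n (Mmap (Qmap t))) := by
        rw [← mpQ.map_eq]
        exact integral_map measurable_Qmap.aemeasurable
          (measurable_h.mul ((continuous_conj_chG n).measurable.comp
            measurable_Mmap)).aestronglyMeasurable
      have hI3d : (∫ t in Hex, h (Qmap t) * conj (chG n (Mmap (Qmap t)))) = 0 := by
        have hstep : ∀ t ∈ Hex, h (Qmap t) * conj (chG n (Mmap (Qmap t)))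
            = conj (Complex.exp (2*(Real.pi:ℂ)*Complex.I*(n.1:ℂ)/3))
              * ((f : ℝ × ℝ → ℂ) t * conj (phiH (n.1 - n.2, 2*n.2 - n.1) t)) := by
          intro t ht
          have h1 : h (Qmap t) = (f : ℝ × ℝ → ℂ) t := by
            rw [hh_def]
            simp only [Function.comp_apply]
            rw [SQ_eq t ht]
          rw [h1, M_Q, chG_eq_exp_mul_phi n t, map_mul]
          ring
        rw [setIntegral_congr_fun mHex hstep, MeasureTheory.integral_const_mul,
          hf (n.1 - n.2, 2*n.2 - n.1), mul_zero]
      have hzero : (ENNReal.ofReal 3).toReal • (∫ z, H z * conj (chG n z) ∂nuG) = 0 := by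
        rw [← integral_smul_measure, hI3, hI3b, hI3c, hI3d]
      rw [ENNReal.toReal_ofReal (by norm_num)] at hzero
      rcases smul_eq_zero.mp hzero with h3 | hres
      · norm_num at h3
      · exact hres
    have hH0 : H =ᵐ[nuG] 0 := complete_G H hmemH hcoef
    have hH0' : H =ᵐ[ENNReal.ofReal 3 • nuG] (0 : G2 → ℂ) := Measure.ae_smul_measure hH0 _
    have hHM0 : (H ∘ Mmap) =ᵐ[μbox] (0 : G2 → ℂ) ∘ Mmap :=
      ae_eq_comp mpM.aemeasurable (by rw [mpM.map_eq]; exact hH0')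
    have hh0 : h =ᵐ[μbox] 0 := by
      refine hHM.symm.trans (hHM0.trans ?_)
      filter_upwards with p
      simp
    have hh0' : h =ᵐ[volume.restrict Rset] 0 := by rw [boxEq]; exact hh0
    have hfQ : (h ∘ Qmap) =ᵐ[volume.restrict Hex] (0 : (ℝ × ℝ) → ℂ) ∘ Qmap :=
      ae_eq_comp measurable_Qmap.aemeasurable (by rw [mpQ.map_eq]; exact hh0')
    have hf0 : ⇑f =ᵐ[volume.restrict Hex] 0 := by
      have h1 : ⇑f =ᵐ[volume.restrict Hex] (h ∘ Qmap) := by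
        refine (ae_restrict_iff' mHex).2 (ae_of_all _ fun t ht => ?_)
        rw [hh_def]
        simp only [Function.comp_apply]
        rw [SQ_eq t ht]
      refine h1.trans (hfQ.trans ?_)
      filter_upwards with t
      simp
    exact Lp.eq_zero_iff_ae_eq_zero.2 hf0
end
end

section
/- Let n ≥ 1 and let t ∈ ℝ³_H be such that none of (t₁−t₂)/3, (t₂−t₃)/3, (t₃−t₁)/3 is an integer. Then D_n(t) = Θ_n(t) − Θ_{n−1}(t). -/
noncomputable section

open MeasureTheory Filter

/-- Third homogeneous coordinate: `t₃ = -(t₁+t₂)`. -/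
def t3 (t : ℝ × ℝ) : ℝ := -(t.1 + t.2)

/-- The index set `ℍ_n = {j ∈ ℤ³_H : -n ≤ j₁,j₂,j₃ ≤ n}`, in the coordinates
`j = (j₁,j₂)`, `j₃ = -(j₁+j₂)`. -/
def HexIdx (n : ℕ) : Finset (ℤ × ℤ) :=
  (Finset.Icc (-(n:ℤ), -(n:ℤ)) ((n:ℤ), (n:ℤ))).filter
    (fun j => -(n:ℤ) ≤ -(j.1 + j.2) ∧ -(j.1 + j.2) ≤ (n:ℤ))

/-- The hexagonal Dirichlet kernel `D_n = Σ_{j∈ℍ_n} φ_j`. -/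
def Dker (n : ℕ) (t : ℝ × ℝ) : ℂ := ∑ j ∈ HexIdx n, phiH j t

/-- The function `Θ_n`. -/
def Theta (n : ℕ) (t : ℝ × ℝ) : ℝ :=
  (Real.sin ((n+1) * Real.pi * (t.1 - t.2) / 3) *
   Real.sin ((n+1) * Real.pi * (t.2 - t3 t) / 3) *
   Real.sin ((n+1) * Real.pi * (t3 t - t.1) / 3)) /
  (Real.sin (Real.pi * (t.1 - t.2) / 3) *
   Real.sin (Real.pi * (t.2 - t3 t) / 3) *
   Real.sin (Real.pi * (t3 t - t.1) / 3))

/-- Triangle index set {(k₁,k₂) : k₁+k₂ ≤ m} -/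
def Tri (m : ℕ) : Finset (ℕ × ℕ) :=
  (Finset.range (m+1) ×ˢ Finset.range (m+1)).filter (fun k => k.1 + k.2 ≤ m)

lemma mem_Tri {m : ℕ} {k : ℕ × ℕ} : k ∈ Tri m ↔ k.1 + k.2 ≤ m := by
  simp [Tri, Finset.mem_filter, Finset.mem_product]
  omega

/-- complete homogeneous sum -/
def hsum (X Y Z : ℂ) (m : ℕ) : ℂ := ∑ k ∈ Tri m, X^k.1 * Y^k.2 * Z^(m - k.1 - k.2)

lemma hsum_mul (X Y Z : ℂ) (m : ℕ) :
    hsum X Y Z m * ((X-Y)*(Y-Z)*(Z-X)) =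
      X^(m+2)*(Z-Y) + Y^(m+2)*(X-Z) + Z^(m+2)*(Y-X) := by
  induction m with
  | zero =>
    have : Tri 0 = {(0,0)} := by ext k; simp [mem_Tri, Prod.ext_iff]
    simp [hsum, this]; ring
  | succ m ih =>
    have hsplit : Tri (m+1) = Tri m ∪ (Finset.range (m+2)).image (fun i => (i, m+1-i)) := by
      ext k
      simp [mem_Tri, Finset.mem_union, Finset.mem_image]
      constructor
      · intro h
        rcases Nat.lt_or_ge (k.1+k.2) (m+1) with h'|h'
        · exact Or.inl (by omega)
        · right; exact ⟨k.1, by omega, by rw [show m+1-k.1 = k.2 by omega]⟩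
      · rintro (h | ⟨i, hi, rfl⟩)
        · omega
        · simp; omega
    have hdisj : Disjoint (Tri m) ((Finset.range (m+2)).image (fun i => (i, m+1-i))) := by
      rw [Finset.disjoint_left]
      rintro k hk hk'
      simp only [Finset.mem_image, Finset.mem_range] at hk'
      obtain ⟨i, hi, rfl⟩ := hk'
      rw [mem_Tri] at hk; omega
    have hedge : ∑ k ∈ (Finset.range (m+2)).image (fun i => (i, m+1-i)),
        X^k.1 * Y^k.2 * Z^(m+1-k.1-k.2) = ∑ i ∈ Finset.range (m+2), X^i * Y^(m+1-i) := by
      rw [Finset.sum_image (by intro a _ b _ h; exact (Prod.mk.injEq _ _ _ _ ▸ h).1)]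
      refine Finset.sum_congr rfl fun i hi => ?_
      rw [Finset.mem_range] at hi
      rw [show m+1-i-(m+1-i) = 0 by omega, pow_zero, mul_one]
    have hgeo : (∑ i ∈ Finset.range (m+2), X^i * Y^(m+1-i)) * (X - Y) = X^(m+2) - Y^(m+2) := by
      have := geom_sum₂_mul X Y (m+2)
      simpa using this
    have htri : ∑ k ∈ Tri m, X^k.1 * Y^k.2 * Z^(m+1-k.1-k.2)
        = Z * hsum X Y Z m := by
      rw [hsum, Finset.mul_sum]
      refine Finset.sum_congr rfl fun k hk => ?_
      rw [mem_Tri] at hk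
      rw [show m+1-k.1-k.2 = (m-k.1-k.2)+1 by omega, pow_succ]
      ring
    rw [hsum, hsplit, Finset.sum_union hdisj, hedge, htri, add_mul]
    have h1 : Z * hsum X Y Z m * ((X-Y)*(Y-Z)*(Z-X))
        = Z * (X^(m+2)*(Z-Y) + Y^(m+2)*(X-Z) + Z^(m+2)*(Y-X)) := by
      rw [← ih]; ring
    rw [h1]
    have h2 : (∑ i ∈ Finset.range (m+2), X^i * Y^(m+1-i)) * ((X-Y)*(Y-Z)*(Z-X))
        = (X^(m+2) - Y^(m+2)) * ((Y-Z)*(Z-X)) := by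
      rw [← hgeo]; ring
    rw [h2, show m+1+2 = (m+2)+1 by omega, pow_succ, pow_succ, pow_succ]
    ring

/-- Hexagon in ℕ coordinates -/
def HexN (n : ℕ) : Finset (ℕ × ℕ) :=
  (Tri (3*n)).filter (fun k => k.1 ≤ 2*n ∧ k.2 ≤ 2*n ∧ n ≤ k.1 + k.2)

lemma mem_HexN {n : ℕ} {k : ℕ × ℕ} :
    k ∈ HexN n ↔ k.1 + k.2 ≤ 3*n ∧ k.1 ≤ 2*n ∧ k.2 ≤ 2*n ∧ n ≤ k.1 + k.2 := by
  simp [HexN, Finset.mem_filter, mem_Tri]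

/-- corner sum reindex: generic corner with shift in first coordinate -/
lemma cornerA_sum (X Y Z : ℂ) (n : ℕ) (hn : 1 ≤ n) :
    ∑ k ∈ (Tri (3*n)).filter (fun k => 2*n+1 ≤ k.1), X^k.1 * Y^k.2 * Z^(3*n-k.1-k.2)
      = X^(2*n+1) * hsum X Y Z (n-1) := by
  rw [hsum, Finset.mul_sum]
  refine Finset.sum_nbij' (fun k => (k.1 - (2*n+1), k.2)) (fun l => (l.1 + (2*n+1), l.2))
    ?_ ?_ ?_ ?_ ?_
  · rintro ⟨a,b⟩ hk
    simp only [Finset.mem_filter, mem_Tri] at hk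
    rw [mem_Tri]; dsimp only; omega
  · rintro ⟨a,b⟩ hl
    rw [mem_Tri] at hl
    simp only [Finset.mem_filter, mem_Tri]; dsimp only at *; omega
  · rintro ⟨a,b⟩ hk
    simp only [Finset.mem_filter, mem_Tri] at hk
    ext <;> simp <;> omega
  · rintro ⟨a,b⟩ hl; ext <;> simp
  · rintro ⟨a,b⟩ hk
    simp only [Finset.mem_filter, mem_Tri] at hk
    dsimp only at *
    obtain ⟨l, rfl⟩ : ∃ l, a = 2*n+1+l := ⟨a-(2*n+1), by omega⟩
    rw [Nat.add_sub_cancel_left, show 3*n - (2*n+1+l) - b = (n-1) - l - b by omega, pow_add]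
    ring

lemma cornerB_sum (X Y Z : ℂ) (n : ℕ) (hn : 1 ≤ n) :
    ∑ k ∈ (Tri (3*n)).filter (fun k => 2*n+1 ≤ k.2), X^k.1 * Y^k.2 * Z^(3*n-k.1-k.2)
      = Y^(2*n+1) * hsum X Y Z (n-1) := by
  rw [hsum, Finset.mul_sum]
  refine Finset.sum_nbij' (fun k => (k.1, k.2 - (2*n+1))) (fun l => (l.1, l.2 + (2*n+1)))
    ?_ ?_ ?_ ?_ ?_
  · rintro ⟨a,b⟩ hk
    simp only [Finset.mem_filter, mem_Tri] at hk
    rw [mem_Tri]; dsimp only; omega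
  · rintro ⟨a,b⟩ hl
    rw [mem_Tri] at hl
    simp only [Finset.mem_filter, mem_Tri]; dsimp only at *; omega
  · rintro ⟨a,b⟩ hk
    simp only [Finset.mem_filter, mem_Tri] at hk
    ext <;> simp <;> omega
  · rintro ⟨a,b⟩ hl; ext <;> simp
  · rintro ⟨a,b⟩ hk
    simp only [Finset.mem_filter, mem_Tri] at hk
    dsimp only at *
    obtain ⟨l, rfl⟩ : ∃ l, b = 2*n+1+l := ⟨b-(2*n+1), by omega⟩
    rw [Nat.add_sub_cancel_left, show 3*n - a - (2*n+1+l) = (n-1) - a - l by omega, pow_add]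
    ring

lemma cornerC_sum (X Y Z : ℂ) (n : ℕ) (hn : 1 ≤ n) :
    ∑ k ∈ (Tri (3*n)).filter (fun k => k.1 + k.2 < n), X^k.1 * Y^k.2 * Z^(3*n-k.1-k.2)
      = Z^(2*n+1) * hsum X Y Z (n-1) := by
  have hC : (Tri (3*n)).filter (fun k => k.1 + k.2 < n) = Tri (n-1) := by
    ext k; simp only [Finset.mem_filter, mem_Tri]; omega
  rw [hC, hsum, Finset.mul_sum]
  refine Finset.sum_congr rfl fun k hk => ?_
  rw [mem_Tri] at hk
  rw [show 3*n - k.1 - k.2 = (2*n+1) + ((n-1) - k.1 - k.2) by omega, pow_add]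
  ring

/-- decomposition of the triangle sum -/
lemma tri_sum_decomp (X Y Z : ℂ) (n : ℕ) (hn : 1 ≤ n) :
    hsum X Y Z (3*n) =
      (∑ k ∈ HexN n, X^k.1 * Y^k.2 * Z^(3*n-k.1-k.2))
      + (X^(2*n+1) + Y^(2*n+1) + Z^(2*n+1)) * hsum X Y Z (n-1) := by
  classical
  set f : ℕ × ℕ → ℂ := fun k => X^k.1 * Y^k.2 * Z^(3*n-k.1-k.2) with hf
  have hA := cornerA_sum X Y Z n hn
  have hB := cornerB_sum X Y Z n hn
  have hC := cornerC_sum X Y Z n hn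
  have hsplit : Tri (3*n) =
      HexN n ∪ ((Tri (3*n)).filter (fun k => 2*n+1 ≤ k.1)
        ∪ ((Tri (3*n)).filter (fun k => 2*n+1 ≤ k.2)
          ∪ (Tri (3*n)).filter (fun k => k.1 + k.2 < n))) := by
    ext k
    simp only [Finset.mem_union, mem_HexN, Finset.mem_filter, mem_Tri]
    omega
  have d1 : Disjoint ((Tri (3*n)).filter (fun k => 2*n+1 ≤ k.2))
      ((Tri (3*n)).filter (fun k => k.1 + k.2 < n)) := by
    rw [Finset.disjoint_left]; intro k hk hk'
    simp only [Finset.mem_filter, mem_Tri] at hk hk'; omega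
  have d2 : Disjoint ((Tri (3*n)).filter (fun k => 2*n+1 ≤ k.1))
      (((Tri (3*n)).filter (fun k => 2*n+1 ≤ k.2)
          ∪ (Tri (3*n)).filter (fun k => k.1 + k.2 < n))) := by
    rw [Finset.disjoint_left]; intro k hk hk'
    simp only [Finset.mem_union, Finset.mem_filter, mem_Tri] at hk hk'; omega
  have d3 : Disjoint (HexN n)
      ((Tri (3*n)).filter (fun k => 2*n+1 ≤ k.1)
        ∪ ((Tri (3*n)).filter (fun k => 2*n+1 ≤ k.2)
          ∪ (Tri (3*n)).filter (fun k => k.1 + k.2 < n))) := by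
    rw [Finset.disjoint_left]; intro k hk hk'
    simp only [Finset.mem_union, mem_HexN, Finset.mem_filter, mem_Tri] at hk hk'; omega
  rw [hsum, hsplit, Finset.sum_union d3, Finset.sum_union d2, Finset.sum_union d1,
    hA, hB, hC]
  ring

lemma key_identity (X Y Z P Q R : ℂ) (hXYZ : X*Y*Z = 1) (hPQR : P*Q*R = 1) :
    (P^3*X^2*(Z-Y) + Q^3*Y^2*(X-Z) + R^3*Z^2*(Y-X))
      - (P^2*X + Q^2*Y + R^2*Z) * (P*X*(Z-Y) + Q*Y*(X-Z) + R*Z*(Y-X))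
      = (P*X - Q*Y)*(Q*Y - R*Z)*(R*Z - P*X) - (P-Q)*(Q-R)*(R-P) := by
  linear_combination (P^2*Q - P^2*R - P*Q^2 + P*R^2 + Q^2*R - Q*R^2) * hXYZ

/-- closed form for the hexagon sum times the Vandermonde -/
lemma hex_closed (X Y Z : ℂ) (hXYZ : X*Y*Z = 1) (n : ℕ) (hn : 1 ≤ n) :
    (∑ k ∈ HexN n, X^k.1 * Y^k.2 * Z^(3*n-k.1-k.2)) * ((X-Y)*(Y-Z)*(Z-X))
      = (X^(n+1)-Y^(n+1))*(Y^(n+1)-Z^(n+1))*(Z^(n+1)-X^(n+1))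
        - (X^n-Y^n)*(Y^n-Z^n)*(Z^n-X^n) := by
  have hdec := tri_sum_decomp X Y Z n hn
  have hsum3n := hsum_mul X Y Z (3*n)
  have hsumn1 := hsum_mul X Y Z (n-1)
  have hPQR : (X^n)*(Y^n)*(Z^n) = 1 := by
    rw [← mul_pow, ← mul_pow, hXYZ, one_pow]
  have key := key_identity X Y Z (X^n) (Y^n) (Z^n) hXYZ hPQR
  have hS : (∑ k ∈ HexN n, X^k.1 * Y^k.2 * Z^(3*n-k.1-k.2))
      = hsum X Y Z (3*n) - (X^(2*n+1) + Y^(2*n+1) + Z^(2*n+1)) * hsum X Y Z (n-1) := by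
    rw [hdec]; ring
  rw [hS, sub_mul, hsum3n, mul_assoc, hsumn1]
  have e1 : 3*n+2 = n*3+2 := by ring
  have e2 : n-1+2 = n+1 := by omega
  have e3 : 2*n+1 = n*2+1 := by ring
  rw [e1, e2, e3]
  simp only [pow_add, pow_mul, pow_one]
  linear_combination key

lemma sin_prod_alg (u v w A B C : ℂ) (hu0 : u ≠ 0) (hv0 : v ≠ 0) (hw0 : w ≠ 0)
    (hu : u^2 * B = A) (hv : v^2 * C = B) (hw : w^2 * A = C)
    (huvw : u * v * w = 1) (hABC : A * B * C = 1) :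
    (((u⁻¹ - u) * Complex.I) / 2) * (((v⁻¹ - v) * Complex.I) / 2) *
      (((w⁻¹ - w) * Complex.I) / 2)
    = Complex.I/8 * ((A - B) * (B - C) * (C - A)) := by
  have s1 : (u⁻¹ - u) * (u * B) = B - A := by
    rw [sub_mul, ← mul_assoc, inv_mul_cancel₀ hu0, one_mul]
    linear_combination -hu
  have s2 : (v⁻¹ - v) * (v * C) = C - B := by
    rw [sub_mul, ← mul_assoc, inv_mul_cancel₀ hv0, one_mul]
    linear_combination -hv
  have s3 : (w⁻¹ - w) * (w * A) = A - C := by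
    rw [sub_mul, ← mul_assoc, inv_mul_cancel₀ hw0, one_mul]
    linear_combination -hw
  have key : ((u⁻¹ - u) * (v⁻¹ - v) * (w⁻¹ - w)) * ((u*v*w) * (A*B*C))
      = (B - A) * ((C - B) * (A - C)) := by
    linear_combination ((v⁻¹-v)*(v*C))*((w⁻¹-w)*(w*A))*s1 + (B-A)*((w⁻¹-w)*(w*A))*s2
      + (B-A)*(C-B)*s3
  rw [huvw, hABC, mul_one, mul_one] at key
  have hI : Complex.I^2 = -1 := Complex.I_sq
  calc (((u⁻¹ - u) * Complex.I) / 2) * (((v⁻¹ - v) * Complex.I) / 2) *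
      (((w⁻¹ - w) * Complex.I) / 2)
      = ((u⁻¹ - u) * (v⁻¹ - v) * (w⁻¹ - w)) * (Complex.I*Complex.I*Complex.I) / 8 := by ring
    _ = ((B - A) * ((C - B) * (A - C))) * (Complex.I*Complex.I*Complex.I) / 8 := by rw [key]
    _ = Complex.I/8 * ((A - B) * (B - C) * (C - A)) := by
        linear_combination ((B - A) * ((C - B) * (A - C))) * Complex.I / 8 * hI

lemma sin_triple (a b c : ℝ) (h : a + b + c = 0) (m : ℕ) :
    ((Real.sin ((m:ℝ) * Real.pi * (a - b) / 3) * Real.sin ((m:ℝ) * Real.pi * (b - c) / 3) *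
      Real.sin ((m:ℝ) * Real.pi * (c - a) / 3) : ℝ) : ℂ)
    = Complex.I/8 *
      (((Complex.exp (2*(Real.pi:ℂ)*Complex.I*(a:ℂ)/3))^m - (Complex.exp (2*(Real.pi:ℂ)*Complex.I*(b:ℂ)/3))^m) *
       ((Complex.exp (2*(Real.pi:ℂ)*Complex.I*(b:ℂ)/3))^m - (Complex.exp (2*(Real.pi:ℂ)*Complex.I*(c:ℂ)/3))^m) *
       ((Complex.exp (2*(Real.pi:ℂ)*Complex.I*(c:ℂ)/3))^m - (Complex.exp (2*(Real.pi:ℂ)*Complex.I*(a:ℂ)/3))^m)) := by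
  set X := Complex.exp (2*(Real.pi:ℂ)*Complex.I*(a:ℂ)/3) with hX
  set Y := Complex.exp (2*(Real.pi:ℂ)*Complex.I*(b:ℂ)/3) with hY
  set Z := Complex.exp (2*(Real.pi:ℂ)*Complex.I*(c:ℂ)/3) with hZ
  set u := Complex.exp ((((m:ℝ) * Real.pi * (a - b) / 3 : ℝ) : ℂ) * Complex.I) with hu
  set v := Complex.exp ((((m:ℝ) * Real.pi * (b - c) / 3 : ℝ) : ℂ) * Complex.I) with hv
  set w := Complex.exp ((((m:ℝ) * Real.pi * (c - a) / 3 : ℝ) : ℂ) * Complex.I) with hw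
  have hXm : X^m = Complex.exp ((m:ℂ) * (2*(Real.pi:ℂ)*Complex.I*(a:ℂ)/3)) := by
    rw [hX, ← Complex.exp_nat_mul]
  have hYm : Y^m = Complex.exp ((m:ℂ) * (2*(Real.pi:ℂ)*Complex.I*(b:ℂ)/3)) := by
    rw [hY, ← Complex.exp_nat_mul]
  have hZm : Z^m = Complex.exp ((m:ℂ) * (2*(Real.pi:ℂ)*Complex.I*(c:ℂ)/3)) := by
    rw [hZ, ← Complex.exp_nat_mul]
  have hu2 : u^2 * Y^m = X^m := by
    rw [hu, hYm, hXm, ← Complex.exp_nat_mul, ← Complex.exp_add]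
    congr 1
    push_cast
    ring
  have hv2 : v^2 * Z^m = Y^m := by
    rw [hv, hZm, hYm, ← Complex.exp_nat_mul, ← Complex.exp_add]
    congr 1
    push_cast
    ring
  have hw2 : w^2 * X^m = Z^m := by
    rw [hw, hXm, hZm, ← Complex.exp_nat_mul, ← Complex.exp_add]
    congr 1
    push_cast
    ring
  have huvw : u * v * w = 1 := by
    rw [hu, hv, hw, ← Complex.exp_add, ← Complex.exp_add, ← Complex.exp_zero]
    congr 1
    push_cast
    ring
  have hABC : X^m * Y^m * Z^m = 1 := by
    rw [hXm, hYm, hZm, ← Complex.exp_add, ← Complex.exp_add, ← Complex.exp_zero]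
    congr 1
    have hc : ((a:ℂ) + (b:ℂ) + (c:ℂ)) = 0 := by
      have := congrArg (fun x : ℝ => (x : ℂ)) h
      push_cast at this
      simpa using this
    linear_combination (m:ℂ) * 2 * (Real.pi:ℂ) * Complex.I / 3 * hc
  have hsin : ∀ θ : ℝ, ((Real.sin θ : ℝ) : ℂ)
      = (((Complex.exp ((θ:ℂ)*Complex.I))⁻¹ - Complex.exp ((θ:ℂ)*Complex.I)) * Complex.I) / 2 := by
    intro θ
    rw [Complex.ofReal_sin, Complex.sin, neg_mul, Complex.exp_neg]
  rw [Complex.ofReal_mul, Complex.ofReal_mul, hsin, hsin, hsin]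
  exact sin_prod_alg u v w (X^m) (Y^m) (Z^m) (Complex.exp_ne_zero _)
    (Complex.exp_ne_zero _) (Complex.exp_ne_zero _) hu2 hv2 hw2 huvw hABC

/-- the compact formula `D_n = Θ_n - Θ_{n-1}` for the hexagonal
Dirichlet kernel, valid whenever none of `(t₁-t₂)/3`, `(t₂-t₃)/3`, `(t₃-t₁)/3`
is an integer. -/
theorem stmt1 (n : ℕ) (hn : 1 ≤ n) (t : ℝ × ℝ)
    (h1 : ∀ m : ℤ, (t.1 - t.2) / 3 ≠ (m : ℝ))
    (h2 : ∀ m : ℤ, (t.2 - t3 t) / 3 ≠ (m : ℝ))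
    (h3 : ∀ m : ℤ, (t3 t - t.1) / 3 ≠ (m : ℝ)) :
    Dker n t = ((Theta n t - Theta (n - 1) t : ℝ) : ℂ) := by
  set X := Complex.exp (2*(Real.pi:ℂ)*Complex.I*(t.1:ℂ)/3) with hXdef
  set Y := Complex.exp (2*(Real.pi:ℂ)*Complex.I*(t.2:ℂ)/3) with hYdef
  set Z := Complex.exp (2*(Real.pi:ℂ)*Complex.I*((t3 t : ℝ):ℂ)/3) with hZdef
  have hX0 : X ≠ 0 := Complex.exp_ne_zero _
  have hY0 : Y ≠ 0 := Complex.exp_ne_zero _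
  have hZ0 : Z ≠ 0 := Complex.exp_ne_zero _
  have hsum0 : t.1 + t.2 + t3 t = 0 := by rw [t3]; ring
  have hcC : ((t3 t : ℝ) : ℂ) = -(((t.1 : ℝ):ℂ) + ((t.2 : ℝ):ℂ)) := by
    push_cast [t3]; ring
  have hXYZ : X * Y * Z = 1 := by
    rw [hXdef, hYdef, hZdef, ← Complex.exp_add, ← Complex.exp_add, ← Complex.exp_zero]
    congr 1
    rw [hcC]; ring
  -- φ in X,Y,Z form
  have hphi : ∀ j : ℤ × ℤ, phiH j t = X ^ j.1 * Y ^ j.2 * Z ^ (-(j.1 + j.2)) := by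
    intro j
    rw [hXdef, hYdef, hZdef, ← Complex.exp_int_mul, ← Complex.exp_int_mul,
      ← Complex.exp_int_mul, ← Complex.exp_add, ← Complex.exp_add, phiH]
    congr 1
    rw [hcC]
    push_cast
    ring
  -- reindexing the hexagon sum
  have hreindex : Dker n t = ∑ k ∈ HexN n, X^k.1 * Y^k.2 * Z^(3*n - k.1 - k.2) := by
    rw [Dker]
    refine Finset.sum_nbij' (fun j => ((j.1 + n).toNat, (j.2 + n).toNat))
      (fun k => ((k.1 : ℤ) - n, (k.2 : ℤ) - n)) ?_ ?_ ?_ ?_ ?_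
    · rintro ⟨p, q⟩ hj
      simp only [HexIdx, Finset.mem_filter, Finset.mem_Icc, Prod.mk_le_mk] at hj
      rw [mem_HexN]
      dsimp only
      omega
    · rintro ⟨p, q⟩ hk
      rw [mem_HexN] at hk
      simp only [HexIdx, Finset.mem_filter, Finset.mem_Icc, Prod.mk_le_mk]
      dsimp only at *
      omega
    · rintro ⟨p, q⟩ hj
      simp only [HexIdx, Finset.mem_filter, Finset.mem_Icc, Prod.mk_le_mk] at hj
      ext <;> dsimp only <;> omega
    · rintro ⟨p, q⟩ hk
      rw [mem_HexN] at hk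
      dsimp only at *
      ext <;> dsimp only <;> omega
    · rintro ⟨p, q⟩ hj
      simp only [HexIdx, Finset.mem_filter, Finset.mem_Icc, Prod.mk_le_mk] at hj
      rw [hphi ⟨p, q⟩]
      dsimp only at *
      obtain ⟨k1, hk1⟩ : ∃ k1 : ℕ, (k1 : ℤ) = p + ↑n := ⟨(p + ↑n).toNat, by omega⟩
      obtain ⟨k2, hk2⟩ : ∃ k2 : ℕ, (k2 : ℤ) = q + ↑n := ⟨(q + ↑n).toNat, by omega⟩
      have r1 : (p + ↑n).toNat = k1 := by omega
      have r2 : (q + ↑n).toNat = k2 := by omega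
      rw [r1, r2]
      have hp : p = (k1 : ℤ) - n := by omega
      have hq : q = (k2 : ℤ) - n := by omega
      subst hp hq
      have e3 : (-(((k1:ℤ) - n) + ((k2:ℤ) - n))) = ((3*n - k1 - k2 : ℕ) : ℤ) - n := by omega
      rw [e3, zpow_sub₀ hX0, zpow_sub₀ hY0, zpow_sub₀ hZ0,
        zpow_natCast, zpow_natCast, zpow_natCast, zpow_natCast, zpow_natCast, zpow_natCast]
      have hprod : X^n * Y^n * Z^n = 1 := by rw [← mul_pow, ← mul_pow, hXYZ, one_pow]
      field_simp
      linear_combination -hprod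
  -- sine triple products
  have hst : ∀ m : ℕ,
      ((Real.sin ((m:ℝ) * Real.pi * (t.1 - t.2) / 3) * Real.sin ((m:ℝ) * Real.pi * (t.2 - t3 t) / 3) *
        Real.sin ((m:ℝ) * Real.pi * (t3 t - t.1) / 3) : ℝ) : ℂ)
      = Complex.I/8 * ((X^m - Y^m) * (Y^m - Z^m) * (Z^m - X^m)) := by
    have := fun m => sin_triple t.1 t.2 (t3 t) hsum0 m
    simpa only [← hXdef, ← hYdef, ← hZdef] using this
  -- nonvanishing of the sines
  have hπ : Real.pi ≠ 0 := Real.pi_ne_zero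
  have hsin_ne : ∀ (x : ℝ), (∀ m : ℤ, x / 3 ≠ (m : ℝ)) → Real.sin (Real.pi * x / 3) ≠ 0 := by
    intro x hx hzero
    rw [Real.sin_eq_zero_iff] at hzero
    obtain ⟨k, hk⟩ := hzero
    apply hx k
    have h0 : Real.pi * (x / 3 - (k:ℝ)) = 0 := by linear_combination -hk
    rcases mul_eq_zero.mp h0 with h | h
    · exact absurd h hπ
    · linarith
  have hs1 : Real.sin (Real.pi * (t.1 - t.2) / 3) ≠ 0 := hsin_ne _ h1
  have hs2 : Real.sin (Real.pi * (t.2 - t3 t) / 3) ≠ 0 := hsin_ne _ h2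
  have hs3 : Real.sin (Real.pi * (t3 t - t.1) / 3) ≠ 0 := hsin_ne _ h3
  have h8 : (Complex.I/8 : ℂ) ≠ 0 := by
    simp [Complex.I_ne_zero]
  -- the Vandermonde is nonzero
  have d1 : Real.pi * (t.1 - t.2) / 3 = ((1:ℕ):ℝ) * Real.pi * (t.1 - t.2) / 3 := by push_cast; ring
  have d2 : Real.pi * (t.2 - t3 t) / 3 = ((1:ℕ):ℝ) * Real.pi * (t.2 - t3 t) / 3 := by push_cast; ring
  have d3 : Real.pi * (t3 t - t.1) / 3 = ((1:ℕ):ℝ) * Real.pi * (t3 t - t.1) / 3 := by push_cast; ring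
  have hst1 : ((Real.sin (Real.pi * (t.1 - t.2) / 3) * Real.sin (Real.pi * (t.2 - t3 t) / 3) *
        Real.sin (Real.pi * (t3 t - t.1) / 3) : ℝ) : ℂ)
      = Complex.I/8 * ((X - Y) * (Y - Z) * (Z - X)) := by
    rw [d1, d2, d3, hst 1]
    simp [pow_one]
  have hV1 : (X - Y) * (Y - Z) * (Z - X) ≠ 0 := by
    intro hV0
    rw [hV0, mul_zero] at hst1
    rw [Complex.ofReal_eq_zero] at hst1
    exact (mul_ne_zero (mul_ne_zero hs1 hs2) hs3) hst1
  -- Theta in closed form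
  have hTh : ∀ m : ℕ, ((Theta m t : ℝ) : ℂ)
      = ((X^(m+1) - Y^(m+1)) * (Y^(m+1) - Z^(m+1)) * (Z^(m+1) - X^(m+1)))
        / ((X - Y) * (Y - Z) * (Z - X)) := by
    intro m
    rw [Theta, Complex.ofReal_div]
    have e1 : ((m:ℝ)+1) * Real.pi * (t.1 - t.2) / 3 = ((m+1:ℕ):ℝ) * Real.pi * (t.1 - t.2) / 3 := by
      push_cast; ring
    have e2 : ((m:ℝ)+1) * Real.pi * (t.2 - t3 t) / 3 = ((m+1:ℕ):ℝ) * Real.pi * (t.2 - t3 t) / 3 := by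
      push_cast; ring
    have e3 : ((m:ℝ)+1) * Real.pi * (t3 t - t.1) / 3 = ((m+1:ℕ):ℝ) * Real.pi * (t3 t - t.1) / 3 := by
      push_cast; ring
    rw [e1, e2, e3, hst (m+1), hst1]
    rw [mul_div_mul_left _ _ h8]
  -- final assembly
  rw [Complex.ofReal_sub, hTh n, hTh (n-1), Nat.sub_add_cancel hn]
  rw [div_sub_div_same, eq_div_iff hV1, hreindex]
  exact hex_closed X Y Z hXYZ n hn
end
end

section
/- Let f : ℝ³_H → ℂ be H-periodic and continuous. Define g on Ω* := {(s₁,s₂) ∈ ℝ² : −1 ≤ s₁, s₂, s₁+s₂ ≤ 1} by g(s₁,s₂) := f(2s₁−s₂, 2s₂−s₁, −s₁−s₂), and let g* : [−1,1]² → ℂ be any continuous extension of g. For m ≥ 0 let 𝒯_m := span_ℂ{(u₁,u₂) ↦ exp(2πi(k₁u₁+k₂u₂)) : k₁,k₂ ∈ ℤ, |k₁| ≤ m, |k₂| ≤ m} and ℰ_m(g*) := inf_{T∈𝒯_m} max_{u∈[−1,1]²} |g*(u) − T(u)|. Then for every n ≥ 1, E_n(f)_∞ ≤ ℰ_{⌊n/2⌋}(g*).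 -/
noncomputable section

open MeasureTheory Filter

/-- `f` is `H`-periodic. -/
def HPeriodic (f : ℝ × ℝ → ℂ) : Prop :=
  ∀ j : ℤ × ℤ, (3 : ℤ) ∣ (j.1 - j.2) → (3 : ℤ) ∣ (j.2 - (-(j.1 + j.2))) →
    ∀ t : ℝ × ℝ, f (t.1 + (j.1 : ℝ), t.2 + (j.2 : ℝ)) = f t

/-- `𝓗_n = span{φ_j : j ∈ ℍ_n}`, the hexagonal trigonometric polynomials of degree `n`. -/
def HexSpan (n : ℕ) : Submodule ℂ (ℝ × ℝ → ℂ) :=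
  Submodule.span ℂ (phiH '' (HexIdx n : Set (ℤ × ℤ)))

/-- Sup norm over a set. -/
def supNormOn (f : ℝ × ℝ → ℂ) (K : Set (ℝ × ℝ)) : ℝ := ⨆ t : K, ‖f t‖

/-- Best approximation `E_n(f)_∞` by elements of `𝓗_n` in the uniform norm on `Ω̄`. -/
def EbestInf (n : ℕ) (f : ℝ × ℝ → ℂ) : ℝ :=
  ⨅ S : HexSpan n, supNormOn (fun t => f t - (S : ℝ × ℝ → ℂ) t) (closure Hex)

/-- The bivariate trigonometric polynomials `𝒯_m` of degree `≤ m` in each variable. -/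
def TrigSpan (m : ℕ) : Submodule ℂ (ℝ × ℝ → ℂ) :=
  Submodule.span ℂ {g | ∃ k : ℤ × ℤ, k.1.natAbs ≤ m ∧ k.2.natAbs ≤ m ∧
    g = fun u : ℝ × ℝ => Complex.exp (2 * Real.pi * Complex.I * ((k.1 : ℂ) * u.1 + (k.2 : ℂ) * u.2))}

/-- `ℰ_m(g)`: best uniform approximation of `g` on `[-1,1]²` by elements of `𝒯_m`. -/
def EbestTrig (m : ℕ) (g : ℝ × ℝ → ℂ) : ℝ :=
  ⨅ T : TrigSpan m, supNormOn (fun u => g u - (T : ℝ × ℝ → ℂ) u) (Set.Icc (-1, -1) (1, 1))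

/-- The region `Ω* = {s : -1 ≤ s₁, s₂, s₁+s₂ ≤ 1}`. -/
def OmegaStar : Set (ℝ × ℝ) :=
  {s | -1 ≤ s.1 ∧ s.1 ≤ 1 ∧ -1 ≤ s.2 ∧ s.2 ≤ 1 ∧ -1 ≤ s.1 + s.2 ∧ s.1 + s.2 ≤ 1}

-- auxiliary stuff
def psiMap : ℝ × ℝ → ℝ × ℝ := fun t => ((2*t.1+t.2)/3, (t.1+2*t.2)/3)

def compPsi : (ℝ × ℝ → ℂ) →ₗ[ℂ] (ℝ × ℝ → ℂ) where
  toFun g := g ∘ psiMap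
  map_add' _ _ := rfl
  map_smul' _ _ := rfl

lemma comp_mem_hexSpan {m n : ℕ} (h : 2*m ≤ n) {T : ℝ × ℝ → ℂ} (hT : T ∈ TrigSpan m) :
    compPsi T ∈ HexSpan n := by
  have hle : TrigSpan m ≤ (HexSpan n).comap compPsi := by
    rw [TrigSpan, Submodule.span_le]
    rintro g ⟨k, hk1, hk2, rfl⟩
    rw [SetLike.mem_coe, Submodule.mem_comap]
    have heq : compPsi (fun u : ℝ × ℝ => Complex.exp (2 * Real.pi * Complex.I *
        ((k.1 : ℂ) * u.1 + (k.2 : ℂ) * u.2))) = phiH k := by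
      funext t
      show Complex.exp _ = _
      unfold phiH psiMap
      congr 1
      push_cast
      ring
    rw [heq]
    apply Submodule.subset_span
    refine ⟨k, ?_, rfl⟩
    rw [Finset.mem_coe, HexIdx, Finset.mem_filter, Finset.mem_Icc, Prod.mk_le_mk, Prod.mk_le_mk]
    omega
  exact hle hT

def contSub : Submodule ℂ (ℝ × ℝ → ℂ) where
  carrier := {g | Continuous g}
  add_mem' := Continuous.add
  zero_mem' := continuous_const
  smul_mem' c g hg := by exact hg.const_smul c

lemma trig_continuous {m : ℕ} {T : ℝ × ℝ → ℂ} (hT : T ∈ TrigSpan m) : Continuous T := by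
  have hle : TrigSpan m ≤ contSub := by
    rw [TrigSpan, Submodule.span_le]
    rintro g ⟨k, _, _, rfl⟩
    show Continuous _
    fun_prop
  exact hle hT

lemma supNormOn_nonneg (f : ℝ × ℝ → ℂ) (K : Set (ℝ × ℝ)) : 0 ≤ supNormOn f K :=
  Real.iSup_nonneg fun _ => norm_nonneg _

/-- if `f` is `H`-periodic and continuous, `g(s₁,s₂) = f(2s₁-s₂, 2s₂-s₁, -s₁-s₂)`
on `Ω*`, and `g*` is a continuous extension of `g` to `[-1,1]²`, then
`E_n(f)_∞ ≤ ℰ_{⌊n/2⌋}(g*)`. -/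
theorem stmt9 (f : ℝ × ℝ → ℂ) (hper : HPeriodic f) (hc : Continuous f)
    (gstar : ℝ × ℝ → ℂ) (hgc : ContinuousOn gstar (Set.Icc (-1, -1) (1, 1)))
    (hext : ∀ s ∈ OmegaStar, gstar s = f (2 * s.1 - s.2, 2 * s.2 - s.1))
    (n : ℕ) (hn : 1 ≤ n) :
    EbestInf n f ≤ EbestTrig (n / 2) gstar := by
  have hne : Nonempty (TrigSpan (n / 2)) := ⟨0⟩
  refine le_ciInf fun Tsub => ?_
  obtain ⟨T, hTmem⟩ := Tsub
  have hTc : Continuous T := trig_continuous hTmem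
  have hS : compPsi T ∈ HexSpan n := comp_mem_hexSpan (by omega) hTmem
  have hbdbelow : BddBelow (Set.range fun S : HexSpan n =>
      supNormOn (fun t => f t - (S : ℝ × ℝ → ℂ) t) (closure Hex)) := by
    refine ⟨0, ?_⟩
    rintro x ⟨S, rfl⟩
    exact supNormOn_nonneg _ _
  have step1 : EbestInf n f ≤
      supNormOn (fun t => f t - compPsi T t) (closure Hex) :=
    ciInf_le hbdbelow (⟨compPsi T, hS⟩ : HexSpan n)
  refine step1.trans ?_
  have hK : IsClosed {t : ℝ × ℝ | -1 ≤ t.1 ∧ t.1 ≤ 1 ∧ -1 ≤ t.2 ∧ t.2 ≤ 1 ∧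
      -1 ≤ t.1 + t.2 ∧ t.1 + t.2 ≤ 1} := by
    simp only [Set.setOf_and]
    refine IsClosed.inter (isClosed_le continuous_const continuous_fst) ?_
    refine IsClosed.inter (isClosed_le continuous_fst continuous_const) ?_
    refine IsClosed.inter (isClosed_le continuous_const continuous_snd) ?_
    refine IsClosed.inter (isClosed_le continuous_snd continuous_const) ?_
    exact IsClosed.inter
      (isClosed_le continuous_const (continuous_fst.add continuous_snd))
      (isClosed_le (continuous_fst.add continuous_snd) continuous_const)
  have hclos : closure Hex ⊆ {t : ℝ × ℝ | -1 ≤ t.1 ∧ t.1 ≤ 1 ∧ -1 ≤ t.2 ∧ t.2 ≤ 1 ∧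
      -1 ≤ t.1 + t.2 ∧ t.1 + t.2 ≤ 1} := by
    refine closure_minimal ?_ hK
    rintro t ⟨h1, h2, h3, h4, h5, h6⟩
    exact ⟨h1, le_of_lt h2, h3, le_of_lt h4, h5, le_of_lt h6⟩
  have hbdd : BddAbove (Set.range fun u : (Set.Icc ((-1, -1) : ℝ × ℝ) (1, 1)) =>
      ‖gstar u - T u‖) := by
    have hcomp : IsCompact (Set.Icc ((-1, -1) : ℝ × ℝ) (1, 1)) := isCompact_Icc
    have hcont : ContinuousOn (fun u => ‖gstar u - T u‖)
        (Set.Icc ((-1, -1) : ℝ × ℝ) (1, 1)) := (hgc.sub hTc.continuousOn).norm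
    have him := hcomp.bddAbove_image hcont
    rwa [Set.image_eq_range] at him
  refine Real.iSup_le (fun tp => ?_) (supNormOn_nonneg _ _)
  obtain ⟨t, ht⟩ := tp
  obtain ⟨h1, h2, h3, h4, h5, h6⟩ := hclos ht
  have hOm : psiMap t ∈ OmegaStar := by
    refine ⟨by simp [psiMap]; linarith, by simp [psiMap]; linarith,
      by simp [psiMap]; linarith, by simp [psiMap]; linarith,
      ?_, ?_⟩ <;> · simp [psiMap]; linarith
  have hIcc : psiMap t ∈ Set.Icc ((-1, -1) : ℝ × ℝ) (1, 1) := by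
    simp only [Set.mem_Icc, Prod.le_def, psiMap]
    refine ⟨⟨by linarith, by linarith⟩, ⟨by linarith, by linarith⟩⟩
  have hpt : (2 * (psiMap t).1 - (psiMap t).2, 2 * (psiMap t).2 - (psiMap t).1) = t := by
    have e1 : 2 * ((2*t.1+t.2)/3) - (t.1+2*t.2)/3 = t.1 := by ring
    have e2 : 2 * ((t.1+2*t.2)/3) - (2*t.1+t.2)/3 = t.2 := by ring
    simp only [psiMap]
    rw [e1, e2]
  have hval : f t - compPsi T t = gstar (psiMap t) - T (psiMap t) := by
    have := hext (psiMap t) hOm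
    rw [hpt] at this
    rw [← this]
    rfl
  show ‖f t - compPsi T t‖ ≤ _
  rw [hval]
  exact le_ciSup hbdd (⟨psiMap t, hIcc⟩ : Set.Icc ((-1, -1) : ℝ × ℝ) (1, 1))
end
end
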